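/- Let κ₀, κ₁, κ₂, κ₃ be quaternionic spinors such that λ_{mn} := {κ_m, κ_n} is nonzero for all m ≠ n. Then the non-commutative Ptolemy equation holds: λ₀₂⁻¹ λ₀₁ λ₃₁⁻¹ λ₃₂ + λ₀₂⁻¹ λ₀₃ λ₁₃⁻¹ λ₁₂ = 1. (By the paper's Theorem 2, λ_{mn} is the quaternionic lambda length from the spin-decorated horosphere in H⁴ corresponding to κ_m to that corresponding to κ_n, so this is Theorem 3 of the paper.) -/

import Mathlib

open Quaternion

noncomputable section

/-- The involution `q* = a + bi + cj - dk` on quaternions (Clifford reversion). -/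
def qstar (q : ℍ[ℝ]) : ℍ[ℝ] := ⟨q.re, q.imI, q.imJ, -q.imK⟩

/-- The involution `q' = a - bi - cj + dk` on quaternions. -/
def qprime (q : ℍ[ℝ]) : ℍ[ℝ] := ⟨q.re, -q.imI, -q.imJ, q.imK⟩

/-- A paravector is an element of `ℝ + ℝi + ℝj`, i.e. a quaternion with zero `k`-component. -/
def IsParavector (q : ℍ[ℝ]) : Prop := q.imK = 0

/-- The quaternion `k`. -/
def qk : ℍ[ℝ] := ⟨0, 0, 0, 1⟩

/-- A quaternionic spinor: a pair `(ξ, η) ≠ (0,0)` with `ξ * conj η` a paravector. -/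
def IsSpinor (κ : ℍ[ℝ] × ℍ[ℝ]) : Prop := κ ≠ 0 ∧ IsParavector (κ.1 * star κ.2)

/-- The bracket `{κ₁, κ₂} = ξ₁* η₂ − η₁* ξ₂`. -/
def bracket (κ₁ κ₂ : ℍ[ℝ] × ℍ[ℝ]) : ℍ[ℝ] := qstar κ₁.1 * κ₂.2 - qstar κ₁.2 * κ₂.1

/-- Right multiplication `κ x = (ξ x, η x)`. -/
def rmul (κ : ℍ[ℝ] × ℍ[ℝ]) (x : ℍ[ℝ]) : ℍ[ℝ] × ℍ[ℝ] := (κ.1 * x, κ.2 * x)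

/-- The complementary pair `κ̌ = (η', −ξ')`. -/
def qcheck (κ : ℍ[ℝ] × ℍ[ℝ]) : ℍ[ℝ] × ℍ[ℝ] := (qprime κ.2, -qprime κ.1)

/-- The real inner product on `ℍ²`: `⟨κ₁, κ₂⟩ = Re (ξ₁ ξ̄₂ + η₁ η̄₂)`. -/
def qinner (κ₁ κ₂ : ℍ[ℝ] × ℍ[ℝ]) : ℝ := (κ₁.1 * star κ₂.1 + κ₁.2 * star κ₂.2).re

/-- The squared norm `|κ|² = |ξ|² + |η|²` on `ℍ²`. -/
def qnsq (κ : ℍ[ℝ] × ℍ[ℝ]) : ℝ := Quaternion.normSq κ.1 + Quaternion.normSq κ.2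


/-! ### Auxiliary lemmas for the Ptolemy equation -/

@[simp] lemma qstar_re (q : ℍ[ℝ]) : (qstar q).re = q.re := rfl
@[simp] lemma qstar_imI (q : ℍ[ℝ]) : (qstar q).imI = q.imI := rfl
@[simp] lemma qstar_imJ (q : ℍ[ℝ]) : (qstar q).imJ = q.imJ := rfl
@[simp] lemma qstar_imK (q : ℍ[ℝ]) : (qstar q).imK = -q.imK := rfl

lemma bracket_self (κ : ℍ[ℝ] × ℍ[ℝ]) (h : IsSpinor κ) :
    bracket κ κ = 0 := by
  obtain ⟨-, h⟩ := h
  obtain ⟨ξ, η⟩ := κ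
  simp only [IsParavector, Quaternion.imK_mul, Quaternion.re_star, Quaternion.imI_star,
    Quaternion.imJ_star, Quaternion.imK_star] at h
  unfold bracket
  ext <;> simp [Quaternion.re_mul, Quaternion.imI_mul, Quaternion.imJ_mul, Quaternion.imK_mul]
    <;> linarith

set_option maxHeartbeats 1000000 in
lemma bracket_right_lin (κ μ ν : ℍ[ℝ] × ℍ[ℝ]) (a b : ℍ[ℝ]) :
    bracket κ (rmul μ a + rmul ν b) = bracket κ μ * a + bracket κ ν * b := by
  unfold bracket rmul
  simp only [Prod.fst_add, Prod.snd_add]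
  ext <;> simp [Quaternion.re_mul, Quaternion.imI_mul, Quaternion.imJ_mul, Quaternion.imK_mul]
    <;> ring

set_option maxHeartbeats 1000000 in
lemma bracket_left_lin (κ μ ν : ℍ[ℝ] × ℍ[ℝ]) (a b : ℍ[ℝ]) :
    bracket (rmul μ a + rmul ν b) κ = qstar a * bracket μ κ + qstar b * bracket ν κ := by
  unfold bracket rmul
  simp only [Prod.fst_add, Prod.snd_add]
  ext <;> simp [Quaternion.re_mul, Quaternion.imI_mul, Quaternion.imJ_mul, Quaternion.imK_mul]
    <;> ring

/-- `ℍ² ` is linearly equivalent, as a right `ℍ`-module (module over `ℍᵐᵒᵖ`),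
to the free module of rank 2. -/
def e2 : (ℍ[ℝ] × ℍ[ℝ]) ≃ₗ[ℍ[ℝ]ᵐᵒᵖ] (Fin 2 → ℍ[ℝ]ᵐᵒᵖ) where
  toFun κ := ![MulOpposite.op κ.1, MulOpposite.op κ.2]
  invFun f := ((f 0).unop, (f 1).unop)
  map_add' a b := by ext i; fin_cases i <;> simp
  map_smul' r κ := by
    ext i; fin_cases i <;>
      simp [MulOpposite.smul_eq_mul_unop, MulOpposite.op_mul, smul_eq_mul]
  left_inv κ := by simp
  right_inv f := by ext i; fin_cases i <;> simp

lemma smul_eq_rmul (s : ℍ[ℝ]ᵐᵒᵖ) (κ : ℍ[ℝ] × ℍ[ℝ]) : s • κ = rmul κ s.unop := by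
  ext <;> simp [rmul, MulOpposite.smul_eq_mul_unop]

lemma exists_decomp (κ₁ κ₃ ρ : ℍ[ℝ] × ℍ[ℝ])
    (h1 : bracket κ₁ κ₁ = 0) (h3 : bracket κ₃ κ₃ = 0)
    (h13 : bracket κ₁ κ₃ ≠ 0) (h31 : bracket κ₃ κ₁ ≠ 0) :
    ∃ a b : ℍ[ℝ], ρ = rmul κ₁ a + rmul κ₃ b := by
  have key : ∀ (μ : ℍ[ℝ] × ℍ[ℝ]) (a b : ℍ[ℝ]), rmul κ₁ a + rmul κ₃ b = 0 →
      bracket μ κ₁ * a + bracket μ κ₃ * b = 0 := by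
    intro μ a b hab
    rw [← bracket_right_lin, hab]
    simp [bracket]
  have li : LinearIndependent ℍ[ℝ]ᵐᵒᵖ ![κ₁, κ₃] := by
    rw [LinearIndependent.pair_iff]
    intro s t hst
    rw [smul_eq_rmul, smul_eq_rmul] at hst
    have e1 := key κ₁ _ _ hst
    rw [h1, zero_mul, zero_add] at e1
    have hb : t.unop = 0 := by
      rcases mul_eq_zero.1 e1 with h | h
      · exact absurd h h13
      · exact h
    have e3 := key κ₃ _ _ hst
    rw [h3, zero_mul, add_zero] at e3
    have ha : s.unop = 0 := by
      rcases mul_eq_zero.1 e3 with h | h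
      · exact absurd h h31
      · exact h
    exact ⟨MulOpposite.unop_injective ha, MulOpposite.unop_injective hb⟩
  have hfr : Module.finrank ℍ[ℝ]ᵐᵒᵖ (ℍ[ℝ] × ℍ[ℝ]) = 2 := by
    rw [Module.finrank_eq_card_basis (Module.Basis.ofEquivFun e2)]; simp
  have hsp := li.span_eq_top_of_card_eq_finrank (by simp [hfr])
  have hmem : ρ ∈ Submodule.span ℍ[ℝ]ᵐᵒᵖ (Set.range ![κ₁, κ₃]) := by
    rw [hsp]; trivial
  rw [show Set.range ![κ₁, κ₃] = {κ₁, κ₃} by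
    simp [Matrix.range_cons, Matrix.range_empty, Set.pair_comm]] at hmem
  obtain ⟨a, b, hab⟩ := Submodule.mem_span_pair.1 hmem
  exact ⟨a.unop, b.unop, by rw [← hab, smul_eq_rmul, smul_eq_rmul]⟩

/-- The non-commutative Ptolemy equation: for quaternionic spinors `κ₀, κ₁, κ₂, κ₃` with
all pairwise brackets (lambda lengths) `λ_{mn} = {κ_m, κ_n}` nonzero,
`λ₀₂⁻¹ λ₀₁ λ₃₁⁻¹ λ₃₂ + λ₀₂⁻¹ λ₀₃ λ₁₃⁻¹ λ₁₂ = 1`. -/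
theorem noncommutative_ptolemy (κ₀ κ₁ κ₂ κ₃ : ℍ[ℝ] × ℍ[ℝ])
    (h₀ : IsSpinor κ₀) (h₁ : IsSpinor κ₁) (h₂ : IsSpinor κ₂) (h₃ : IsSpinor κ₃)
    (hne : ∀ m n : Fin 4, m ≠ n → bracket (![κ₀, κ₁, κ₂, κ₃] m) (![κ₀, κ₁, κ₂, κ₃] n) ≠ 0) :
    (bracket κ₀ κ₂)⁻¹ * bracket κ₀ κ₁ * (bracket κ₃ κ₁)⁻¹ * bracket κ₃ κ₂ +
    (bracket κ₀ κ₂)⁻¹ * bracket κ₀ κ₃ * (bracket κ₁ κ₃)⁻¹ * bracket κ₁ κ₂ = 1 := by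
  have n02 : bracket κ₀ κ₂ ≠ 0 := by simpa using hne 0 2 (by decide)
  have n13 : bracket κ₁ κ₃ ≠ 0 := by simpa using hne 1 3 (by decide)
  have n31 : bracket κ₃ κ₁ ≠ 0 := by simpa using hne 3 1 (by decide)
  obtain ⟨a, b, h0⟩ := exists_decomp κ₁ κ₃ κ₀ (bracket_self κ₁ h₁) (bracket_self κ₃ h₃) n13 n31
  obtain ⟨c, d, hh2⟩ := exists_decomp κ₁ κ₃ κ₂ (bracket_self κ₁ h₁) (bracket_self κ₃ h₃) n13 n31
  have e01 : bracket κ₀ κ₁ = qstar b * bracket κ₃ κ₁ := by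
    rw [h0, bracket_left_lin, bracket_self κ₁ h₁]; simp
  have e03 : bracket κ₀ κ₃ = qstar a * bracket κ₁ κ₃ := by
    rw [h0, bracket_left_lin, bracket_self κ₃ h₃]; simp
  have e12 : bracket κ₁ κ₂ = bracket κ₁ κ₃ * d := by
    rw [hh2, bracket_right_lin, bracket_self κ₁ h₁]; simp
  have e32 : bracket κ₃ κ₂ = bracket κ₃ κ₁ * c := by
    rw [hh2, bracket_right_lin, bracket_self κ₃ h₃]; simp
  have e02 : bracket κ₀ κ₂ = qstar b * (bracket κ₃ κ₁ * c) + qstar a * (bracket κ₁ κ₃ * d) := by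
    rw [h0, bracket_left_lin, e12, e32, add_comm]
  have key : ∀ (z x q y : ℍ[ℝ]), q ≠ 0 → z * (x * q) * q⁻¹ * (q * y) = z * (x * (q * y)) := by
    intro z x q y hq
    rw [mul_assoc (z * (x * q)) q⁻¹ (q * y), inv_mul_cancel_left₀ hq,
      mul_assoc z (x * q) y, mul_assoc x q y]
  rw [e01, e03, e12, e32, key _ _ _ _ n31, key _ _ _ _ n13, ← mul_add, ← e02,
    inv_mul_cancel₀ n02]
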